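/- Let Φ : ℝ → ℝ be bounded and continuous with M := sup_{x∈ℝ}|Φ(x)| > 0, differentiable at 0 with Φ'(0) > 1, and let λ(V) := 2M + V. Define for V > 0: I(V) := (1/V)·∫₀^V [ z·(2z + Φ(−z) − Φ(z)) ] / [ √(V²−z²)·(z − Φ(z) + λ(V))·(−z − Φ(−z) + λ(V)) ] dz. Then there exists V₁ > 0 such that I(V) < 0 for all 0 < V < V₁. -/

import Mathlib

open Set Filter MeasureTheory
open scoped Topology

/-- The matching functional
`I(V) = (1/V)·∫₀^V z(2z+Φ(−z)−Φ(z)) / (√(V²−z²)(z−Φ(z)+λ(V))(−z−Φ(−z)+λ(V))) dz`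
with `λ(V) = 2M + V`, whose zeros correspond to traveling wave velocities. -/
noncomputable def Ifun (Φ : ℝ → ℝ) (M V : ℝ) : ℝ :=
  (1/V) * ∫ z in (0:ℝ)..V, z * (2*z + Φ (-z) - Φ z) /
    (Real.sqrt (V^2 - z^2) * (z - Φ z + (2*M + V)) * (-z - Φ (-z) + (2*M + V)))

/-- for bounded continuous `Φ` with `M = sup|Φ| > 0` which is
differentiable at `0` with `Φ'(0) > 1`, there is `V₁ > 0` such that `I(V) < 0` for all
`0 < V < V₁`. -/
theorem stmt_13 (Φ : ℝ → ℝ) (M : ℝ) (hΦc : Continuous Φ)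
    (hbdd : BddAbove (Set.range fun x => |Φ x|))
    (hM : M = ⨆ x, |Φ x|) (hMpos : 0 < M)
    (hdiff : DifferentiableAt ℝ Φ 0) (hder : 1 < deriv Φ 0) :
    ∃ V₁ > 0, ∀ V : ℝ, 0 < V → V < V₁ → Ifun Φ M V < 0 := by
  have hΦle : ∀ x, |Φ x| ≤ M := by
    intro x
    rw [hM]
    exact le_ciSup hbdd x
  -- g z := Φ z - Φ (-z) - 2z is positive for small positive z
  set g : ℝ → ℝ := fun z => Φ z - Φ (-z) - 2*z with hg
  have hg0 : g 0 = 0 := by simp [hg]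
  have hgd : HasDerivAt g (2 * deriv Φ 0 - 2) 0 := by
    have h1 : HasDerivAt Φ (deriv Φ 0) 0 := hdiff.hasDerivAt
    have h2 : HasDerivAt (fun z : ℝ => Φ (-z)) (-(deriv Φ 0)) 0 := by
      have h1' : HasDerivAt Φ (deriv Φ 0) (-0) := by simpa using h1
      have := h1'.comp (0 : ℝ) (hasDerivAt_neg 0)
      simp at this
      exact this
    have h3 : HasDerivAt (fun z : ℝ => 2*z) 2 0 := by
      simpa using (hasDerivAt_id (0:ℝ)).const_mul 2
    have := (h1.sub h2).sub h3
    have e : 2 * deriv Φ 0 - 2 = deriv Φ 0 - -deriv Φ 0 - 2 := by ring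
    rw [e]
    exact this
  have hslope : Tendsto (slope g 0) (𝓝[≠] 0) (𝓝 (2 * deriv Φ 0 - 2)) :=
    hasDerivAt_iff_tendsto_slope.mp hgd
  have hpos' : 0 < 2 * deriv Φ 0 - 2 := by linarith
  have hev : ∀ᶠ z in 𝓝[>] (0:ℝ), 0 < slope g 0 z := by
    have : ∀ᶠ z in 𝓝[≠] (0:ℝ), 0 < slope g 0 z :=
      hslope.eventually (eventually_gt_nhds hpos')
    exact this.filter_mono (nhdsWithin_mono 0 (fun x hx => ne_of_gt hx))
  obtain ⟨δ, hδ, hδg⟩ : ∃ δ > 0, ∀ z ∈ Ioo (0:ℝ) δ, 0 < g z := by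
    obtain ⟨u, hu, hsub⟩ := mem_nhdsGT_iff_exists_Ioo_subset.mp hev
    refine ⟨u, hu, fun z hz => ?_⟩
    have hs : 0 < slope g 0 z := hsub hz
    have hz0 : (0:ℝ) < z := hz.1
    rw [slope_def_field, div_eq_mul_inv] at hs
    have : 0 < (g z - g 0) / (z - 0) := by rw [div_eq_mul_inv]; exact hs
    rw [hg0, sub_zero, sub_zero] at this
    have := mul_pos this hz0
    rwa [div_mul_cancel₀ _ (ne_of_gt hz0)] at this
  refine ⟨δ, hδ, fun V hV hVδ => ?_⟩
  -- notation
  set f : ℝ → ℝ := fun z => z * (2*z + Φ (-z) - Φ z) /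
    (Real.sqrt (V^2 - z^2) * (z - Φ z + (2*M + V)) * (-z - Φ (-z) + (2*M + V))) with hf
  -- the integrand is negative on (0, V)
  have hfneg : ∀ z ∈ Ioo (0:ℝ) V, f z < 0 := by
    intro z hz
    have hz0 : 0 < z := hz.1
    have hzV : z < V := hz.2
    have hsq : 0 < Real.sqrt (V^2 - z^2) := by
      apply Real.sqrt_pos.mpr
      nlinarith
    have hA : 0 < z - Φ z + (2*M + V) := by
      have := abs_le.mp (hΦle z)
      nlinarith [this.2]
    have hB : 0 < -z - Φ (-z) + (2*M + V) := by
      have := abs_le.mp (hΦle (-z))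
      nlinarith [this.2]
    have hnum : z * (2*z + Φ (-z) - Φ z) < 0 := by
      have hgz : 0 < g z := hδg z ⟨hz0, hzV.trans hVδ⟩
      have : 2*z + Φ (-z) - Φ z < 0 := by simp only [hg] at hgz; linarith
      exact mul_neg_of_pos_of_neg hz0 this
    exact div_neg_of_neg_of_pos hnum (by positivity)
  -- integrability via comparison with C / sqrt(V^2 - z^2)
  set C : ℝ := V * (2*V + 2*M) / M^2 with hC
  have hCpos : 0 < C := by positivity
  have harcsin : ∀ x ∈ Ioo (0:ℝ) V,
      HasDerivAt (fun z => Real.arcsin (z / V)) (1 / Real.sqrt (V^2 - x^2)) x := by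
    intro x hx
    have hx1 : x / V ≠ -1 := by
      have : 0 < x / V := div_pos hx.1 hV
      linarith
    have hx2 : x / V ≠ 1 := by
      have : x / V < 1 := (div_lt_one hV).mpr hx.2
      linarith
    have h1 := (Real.hasDerivAt_arcsin hx1 hx2).comp x
      ((hasDerivAt_id x).div_const V)
    have h2 : (0:ℝ) ≤ 1 - (x/V)^2 := by
      have : (x/V)^2 < 1 := by
        rw [div_pow, div_lt_one (by positivity)]
        nlinarith [hx.1, hx.2]
      linarith
    have key : Real.sqrt (V^2 - x^2) = Real.sqrt (1-(x/V)^2) * V := by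
      rw [show V^2 - x^2 = (1-(x/V)^2) * V^2 by field_simp,
        Real.sqrt_mul h2, Real.sqrt_sq hV.le]
    have e : 1 / Real.sqrt (V^2 - x^2) = 1 / Real.sqrt (1-(x/V)^2) * (1/V) := by
      rw [key, div_mul_div_comm, one_mul]
    rw [e]
    exact h1
  have hintOn : IntegrableOn (fun z => 1 / Real.sqrt (V^2 - z^2)) (Ioc 0 V) := by
    exact intervalIntegral.integrableOn_deriv_of_nonneg
      (Real.continuous_arcsin.comp (continuous_id.div_const V)).continuousOn
      harcsin (fun x hx => by positivity)
  have hintC : IntegrableOn (fun z => C * (1 / Real.sqrt (V^2 - z^2))) (Ioo 0 V) :=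
    MeasureTheory.IntegrableOn.mono_set (hintOn.const_mul C) Ioo_subset_Ioc_self
  have hnumc : Continuous fun z : ℝ => z * (2*z + Φ (-z) - Φ z) := by fun_prop
  have hdenc : Continuous fun z : ℝ => Real.sqrt (V^2 - z^2) * (z - Φ z + (2*M + V)) *
      (-z - Φ (-z) + (2*M + V)) := by fun_prop
  have hfmeas : Measurable f := hnumc.measurable.div hdenc.measurable
  have hfint : IntegrableOn f (Ioo 0 V) := by
    apply Integrable.mono hintC (hfmeas.aestronglyMeasurable.restrict)
    rw [ae_restrict_iff' measurableSet_Ioo]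
    apply ae_of_all
    intro z hz
    have hz0 : 0 < z := hz.1
    have hzV : z < V := hz.2
    have hsq : 0 < Real.sqrt (V^2 - z^2) := by
      apply Real.sqrt_pos.mpr; nlinarith
    have hA : M ≤ z - Φ z + (2*M + V) := by
      have := abs_le.mp (hΦle z); nlinarith [this.2]
    have hB : M ≤ -z - Φ (-z) + (2*M + V) := by
      have := abs_le.mp (hΦle (-z)); nlinarith [this.2]
    have hnumb : |z * (2*z + Φ (-z) - Φ z)| ≤ V * (2*V + 2*M) := by
      rw [abs_mul]
      apply mul_le_mul
      · rw [abs_of_pos hz0]; linarith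
      · have h1 := abs_le.mp (hΦle z)
        have h2 := abs_le.mp (hΦle (-z))
        rw [abs_le]; constructor <;> nlinarith
      · positivity
      · linarith
    have hden : Real.sqrt (V^2 - z^2) * M^2 ≤
        Real.sqrt (V^2 - z^2) * (z - Φ z + (2*M + V)) * (-z - Φ (-z) + (2*M + V)) := by
      rw [mul_assoc]
      apply mul_le_mul_of_nonneg_left _ hsq.le
      calc M^2 = M * M := sq M
      _ ≤ _ := mul_le_mul hA hB hMpos.le (by linarith)
    simp only [Real.norm_eq_abs, hf]
    rw [abs_div]
    have hCnn : |C * (1 / Real.sqrt (V^2 - z^2))| = C / Real.sqrt (V^2 - z^2) := by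
      rw [abs_of_nonneg (by positivity), mul_one_div]
    rw [hCnn]
    have hdenpos : 0 < Real.sqrt (V^2 - z^2) * M^2 := by positivity
    have habs : |Real.sqrt (V^2 - z^2) * (z - Φ z + (2*M + V)) * (-z - Φ (-z) + (2*M + V))|
        = Real.sqrt (V^2 - z^2) * (z - Φ z + (2*M + V)) * (-z - Φ (-z) + (2*M + V)) := by
      apply abs_of_pos
      calc (0:ℝ) < Real.sqrt (V^2 - z^2) * M^2 := hdenpos
      _ ≤ _ := hden
    rw [habs]
    calc |z * (2*z + Φ (-z) - Φ z)| /
          (Real.sqrt (V^2 - z^2) * (z - Φ z + (2*M + V)) * (-z - Φ (-z) + (2*M + V)))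
        ≤ (V * (2*V + 2*M)) / (Real.sqrt (V^2 - z^2) * M^2) :=
          div_le_div₀ (by positivity) hnumb hdenpos hden
      _ = C / Real.sqrt (V^2 - z^2) := by
          rw [hC]; field_simp
  have hfii : IntervalIntegrable f volume 0 V := by
    rw [intervalIntegrable_iff_integrableOn_Ioo_of_le hV.le]
    exact hfint
  have hint_neg : (∫ z in (0:ℝ)..V, f z) < 0 := by
    have h := intervalIntegral.intervalIntegral_pos_of_pos_on hfii.neg
      (fun x hx => by simpa using (hfneg x hx)) hV
    simp only [Pi.neg_apply] at h
    rw [intervalIntegral.integral_neg] at h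
    linarith
  have : Ifun Φ M V = (1/V) * ∫ z in (0:ℝ)..V, f z := rfl
  rw [this]
  exact mul_neg_of_pos_of_neg (by positivity) hint_neg
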